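/- Assume ᾱ ∉ A_0 and m = d. Let B_0 = {(β_ℓ)_{0≤ℓ<d} ∈ (ℝ^d)^d : the d vectors (|β̂_ℓ(ω)|²)_{ω ∈ Ω_d} are linearly independent, and |β̂_ℓ(ω)|² > 0 for all ℓ < d and ω ∈ Ω_d}. Almost surely, every equilibrium of the game (ℝ^d, B_0, V_n) — i.e. every (α̊, β̊) ∈ ℝ^d × B_0 with ∇_α V_n(α̊, β̊) = 0 and ∇_β V_n(α̊, β̊) = 0 — satisfies α̊ ∈ A_n and is a Nash equilibrium: V_n(α̊, β) ≤ V_n(α̊, β̊) ≤ V_n(α, β̊) for all α ∈ ℝ^d and β ∈ B_0. -/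

import Mathlib

open MeasureTheory ProbabilityTheory Filter
open scoped Real

noncomputable section

/-- Discrete Fourier transform of `x : ℝ^d` at frequency `ω = 2πk/d`. -/
def dft (d : ℕ) (x : Fin d → ℝ) (k : Fin d) : ℂ :=
  ∑ u : Fin d, (x u : ℂ) *
    Complex.exp (-(2 * Real.pi * Complex.I * ((k : ℕ) : ℂ) * ((u : ℕ) : ℂ)) / (d : ℂ))

/-- Circular convolution on `ℝ^d` (indices mod `d`). -/
def cconv (d : ℕ) (a z : Fin d → ℝ) : Fin d → ℝ := fun u => ∑ v : Fin d, a v * z (u - v)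

/-- Covariance matrix of `a ⋆ Z`, `Z ~ N(0, I_d)` white noise. -/
def covMat (d : ℕ) (a : Fin d → ℝ) : Matrix (Fin d) (Fin d) ℝ :=
  Matrix.of fun u u' => ∑ v : Fin d, a (u - v) * a (u' - v)

/-- Spectral (operator) norm of a matrix. -/
def specNorm (d : ℕ) (M : Matrix (Fin d) (Fin d) ℝ) : ℝ :=
  ‖Matrix.toEuclideanCLM (𝕜 := ℝ) M‖

/-- Euclidean norm. -/
def l2norm (d : ℕ) (x : Fin d → ℝ) : ℝ := Real.sqrt (∑ u : Fin d, x u ^ 2)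

/-- Empirical covariance matrix of the first `n` samples. -/
def empCov (d n : ℕ) (y : ℕ → Fin d → ℝ) : Matrix (Fin d) (Fin d) ℝ :=
  (n : ℝ)⁻¹ • ∑ i ∈ Finset.range n, Matrix.vecMulVec (y i) (y i)

/-- Empirical mean of `|ŷ(ω)|²` over the first `n` samples. -/
def empPS (d n : ℕ) (y : ℕ → Fin d → ℝ) (k : Fin d) : ℝ :=
  (n : ℝ)⁻¹ * ∑ i ∈ Finset.range n, Complex.normSq (dft d (y i) k)

/-- The consistent-generator set `A_n` (for a fixed sample `(z̄_i, z_i)_{i<n}`). -/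
def An (d n : ℕ) (abar : Fin d → ℝ) (zbar z : ℕ → Fin d → ℝ) : Set (Fin d → ℝ) :=
  {a | ∀ k : Fin d, Complex.normSq (dft d a k) =
      empPS d n (fun i => cconv d abar (zbar i)) k / empPS d n z k}


/-- The combined family of all Gaussian coordinates of the two sample sequences
`z̄` (at `false`) and `z` (at `true`). -/
def coords {Ω : Type*} (d : ℕ) (zbar z : ℕ → Ω → Fin d → ℝ) :
    Bool × ℕ × Fin d → Ω → ℝ :=
  fun p ω => if p.1 then z p.2.1 ω p.2.2 else zbar p.2.1 ω p.2.2

/-- `(z̄_i)` and `(z_i)` are mutually independent i.i.d. `N(0, I_d)` random vectors: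
all the real coordinates are independent standard Gaussians. -/
def IsWhiteNoisePair {Ω : Type*} [MeasureSpace Ω] (d : ℕ)
    (zbar z : ℕ → Ω → Fin d → ℝ) : Prop :=
  (∀ i, Measurable (zbar i)) ∧ (∀ i, Measurable (z i)) ∧
    iIndepFun (coords d zbar z) ℙ ∧
    ∀ p : Bool × ℕ × Fin d, Measure.map (coords d zbar z p) ℙ = gaussianReal 0 1

/-- `r_{n,ℓ}(α, β) = E_n(‖X ⋆ β_ℓ‖²) − E_n(‖(α ⋆ Z) ⋆ β_ℓ‖²)` for the convolutional
discriminator, given samples `x_i = xs i`, `z_i = zs i`. -/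
def rConv (d n : ℕ) (xs zs : ℕ → Fin d → ℝ) (a : Fin d → ℝ) (bl : Fin d → ℝ) : ℝ :=
  (n : ℝ)⁻¹ * ∑ i ∈ Finset.range n, ∑ u : Fin d, cconv d (xs i) bl u ^ 2
    - (n : ℝ)⁻¹ * ∑ i ∈ Finset.range n, ∑ u : Fin d, cconv d (cconv d a (zs i)) bl u ^ 2

/-- The convolutional-discriminator objective `V_n(α, β) = ∑_{ℓ<m} r_{n,ℓ}(α, β)²`. -/
def VConv (d n m : ℕ) (xs zs : ℕ → Fin d → ℝ) (a : Fin d → ℝ)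
    (b : Fin m → Fin d → ℝ) : ℝ :=
  ∑ ℓ : Fin m, rConv d n xs zs a (b ℓ) ^ 2

/-- The discriminator subset `B_0`: the squared moduli of the DFTs of the `β_ℓ` are
linearly independent and everywhere strictly positive. -/
def B0 (d : ℕ) : Set (Fin d → Fin d → ℝ) :=
  {b | LinearIndependent ℝ
        (fun ℓ : Fin d => fun k : Fin d => Complex.normSq (dft d (b ℓ) k)) ∧
      ∀ ℓ k : Fin d, 0 < Complex.normSq (dft d (b ℓ) k)}

def ee (d : ℕ) (m : ℤ) : ℂ := Complex.exp (2 * Real.pi * Complex.I * m / d)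

lemma ee_add (d : ℕ) (m m' : ℤ) : ee d (m + m') = ee d m * ee d m' := by
  rw [ee, ee, ee, ← Complex.exp_add]
  congr 1
  push_cast
  ring

lemma ee_dvd (d : ℕ) {m : ℤ} (hd : d ≠ 0) (h : (d:ℤ) ∣ m) : ee d m = 1 := by
  obtain ⟨j, rfl⟩ := h
  rw [ee]
  have hdc : (d:ℂ) ≠ 0 := by exact_mod_cast hd
  have : 2 * (Real.pi:ℂ) * Complex.I * ((d:ℤ) * j : ℤ) / (d:ℂ) = (j:ℂ) * (2 * Real.pi * Complex.I) := by
    push_cast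
    field_simp
  rw [this, Complex.exp_int_mul_two_pi_mul_I]

lemma ee_congr (d : ℕ) (hd : d ≠ 0) {m m' : ℤ} (h : m ≡ m' [ZMOD d]) : ee d m = ee d m' := by
  have : m = m' + (m - m') := by ring
  rw [this, ee_add, ee_dvd d hd (Int.ModEq.dvd h.symm), mul_one]

lemma ee_eq_one_iff (d : ℕ) (hd : d ≠ 0) (m : ℤ) : ee d m = 1 ↔ (d:ℤ) ∣ m := by
  constructor
  · intro h
    rw [ee, Complex.exp_eq_one_iff] at h
    obtain ⟨j, hj⟩ := h
    have hdc : (d:ℂ) ≠ 0 := by exact_mod_cast hd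
    have hpi : (Real.pi:ℂ) ≠ 0 := by exact_mod_cast Real.pi_ne_zero
    have h2 : (2:ℂ) * Real.pi * Complex.I ≠ 0 := by
      simp [Complex.I_ne_zero, hpi]
    have hm : (2:ℂ) * Real.pi * Complex.I * (m:ℂ) = 2 * Real.pi * Complex.I * ((j * d : ℤ):ℂ) := by
      field_simp at hj
      push_cast
      linear_combination (2 * (Real.pi:ℂ) * Complex.I) * hj
    have : (m:ℂ) = ((j * d : ℤ):ℂ) := mul_left_cancel₀ h2 hm
    have : m = j * d := by exact_mod_cast this
    exact ⟨j, by rw [this]; ring⟩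
  · exact ee_dvd d hd

lemma ee_pow (d : ℕ) (m : ℤ) (j : ℕ) : ee d (m * j) = ee d m ^ j := by
  induction j with
  | zero => simp [ee]
  | succ j ih =>
    have : m * (j+1 : ℕ) = m * j + m := by push_cast; ring
    rw [this, ee_add, ih, pow_succ]

lemma ee_sum (d : ℕ) (hd : d ≠ 0) (m : ℤ) :
    ∑ k : Fin d, ee d (m * k) = if (d:ℤ) ∣ m then (d:ℂ) else 0 := by
  have : ∀ k : Fin d, ee d (m * k) = ee d m ^ (k:ℕ) := fun k => ee_pow d m k
  simp_rw [this]
  rw [Fin.sum_univ_eq_sum_range (fun j => ee d m ^ j)]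
  by_cases h : (d:ℤ) ∣ m
  · simp [ee_dvd d hd h, h]
  · rw [if_neg h]
    have hne : ee d m ≠ 1 := fun h1 => h ((ee_eq_one_iff d hd m).mp h1)
    rw [geom_sum_eq hne]
    have : ee d m ^ d = 1 := by
      rw [← ee_pow, ee_dvd d hd ⟨m, by ring⟩]
    simp [this]

lemma ee_conj (d : ℕ) (m : ℤ) : (starRingEnd ℂ) (ee d m) = ee d (-m) := by
  rw [ee, ee, ← Complex.exp_conj]
  congr 1
  simp [map_div₀, Complex.conj_ofNat]

lemma dft_eq (d : ℕ) (x : Fin d → ℝ) (k : Fin d) :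
    dft d x k = ∑ u : Fin d, (x u : ℂ) * ee d (-(((k:ℕ):ℤ) * ((u:ℕ):ℤ))) := by
  apply Finset.sum_congr rfl
  intro u _
  congr 1
  rw [ee]
  congr 1
  push_cast
  ring

lemma natmod_modEq (d a : ℕ) : ((a % d : ℕ) : ℤ) ≡ (a : ℤ) [ZMOD (d:ℤ)] := by
  rw [Int.natCast_mod]
  unfold Int.ModEq
  exact Int.emod_emod_of_dvd _ dvd_rfl

lemma dft_cconv (d : ℕ) [NeZero d] (a z : Fin d → ℝ) (k : Fin d) :
    dft d (cconv d a z) k = dft d a k * dft d z k := by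
  have hd : d ≠ 0 := NeZero.ne d
  rw [dft_eq, dft_eq, dft_eq]
  simp only [cconv]
  push_cast
  rw [Finset.sum_mul_sum]
  simp_rw [Finset.sum_mul]
  rw [Finset.sum_comm]
  apply Finset.sum_congr rfl
  intro v _
  rw [← Equiv.sum_comp (Equiv.addRight v)
    (fun u => (a v : ℂ) * (z (u - v) : ℂ) * ee d (-(((k:ℕ):ℤ) * ((u:ℕ):ℤ))))]
  apply Finset.sum_congr rfl
  intro w _
  simp only [Equiv.coe_addRight, add_sub_cancel_right]
  have key : ee d (-(((k:ℕ):ℤ) * (((w + v : Fin d) : ℕ):ℤ)))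
      = ee d (-(((k:ℕ):ℤ)*((v:ℕ):ℤ))) * ee d (-(((k:ℕ):ℤ)*((w:ℕ):ℤ))) := by
    rw [← ee_add]
    apply ee_congr d hd
    have h1 : (((w + v : Fin d)) : ℕ) = ((w:ℕ) + (v:ℕ)) % d := Fin.val_add w v
    rw [h1]
    have base := (natmod_modEq d ((w:ℕ) + (v:ℕ))).neg.mul_left (k:ℤ)
    calc -(((k:ℕ):ℤ) * (((((w:ℕ) + (v:ℕ)) % d) : ℕ):ℤ))
        = ((k:ℕ):ℤ) * (-(((((w:ℕ) + (v:ℕ)) % d : ℕ)) : ℤ)) := by ring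
      _ ≡ ((k:ℕ):ℤ) * (-(((w:ℕ) + (v:ℕ) : ℕ) : ℤ)) [ZMOD (d:ℤ)] := base
      _ = -(((k:ℕ):ℤ)*((v:ℕ):ℤ)) + -(((k:ℕ):ℤ)*((w:ℕ):ℤ)) := by push_cast; ring
  rw [key]
  ring

lemma dft_conj (d : ℕ) (y : Fin d → ℝ) (k : Fin d) :
    (starRingEnd ℂ) (dft d y k) = ∑ u : Fin d, (y u : ℂ) * ee d (((k:ℕ):ℤ) * ((u:ℕ):ℤ)) := by
  rw [dft_eq, map_sum]
  apply Finset.sum_congr rfl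
  intro u _
  rw [map_mul, ee_conj, Complex.conj_ofReal, neg_neg]

lemma fin_dvd_eq {d : ℕ} (u u' : Fin d) (h : (d:ℤ) ∣ (((u':ℕ):ℤ) - ((u:ℕ):ℤ))) : u' = u := by
  have h1 : (((u':ℕ):ℤ) - ((u:ℕ):ℤ)) = 0 := by
    apply Int.eq_zero_of_dvd_of_natAbs_lt_natAbs h
    have h2 := u.isLt
    have h3 := u'.isLt
    omega
  have : (u':ℕ) = (u:ℕ) := by omega
  exact Fin.ext this

lemma parseval (d : ℕ) [NeZero d] (y : Fin d → ℝ) :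
    ∑ k : Fin d, (Complex.normSq (dft d y k) : ℝ) = d * ∑ u : Fin d, (y u)^2 := by
  have hd : d ≠ 0 := NeZero.ne d
  have hC : ((∑ k : Fin d, (Complex.normSq (dft d y k) : ℝ) : ℝ) : ℂ)
      = ((d * ∑ u : Fin d, (y u)^2 : ℝ) : ℂ) := by
    push_cast
    calc ∑ k : Fin d, (Complex.normSq (dft d y k) : ℂ)
        = ∑ k : Fin d, dft d y k * (starRingEnd ℂ) (dft d y k) := by
          simp [Complex.mul_conj]
      _ = ∑ k : Fin d, ∑ u : Fin d, ∑ u' : Fin d,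
            ((y u : ℂ) * ee d (-(((k:ℕ):ℤ) * ((u:ℕ):ℤ)))) *
            ((y u' : ℂ) * ee d (((k:ℕ):ℤ) * ((u':ℕ):ℤ))) := by
          apply Finset.sum_congr rfl
          intro k _
          rw [dft_conj, dft_eq, Finset.sum_mul_sum]
      _ = ∑ u : Fin d, ∑ u' : Fin d, (y u : ℂ) * (y u') *
            (∑ k : Fin d, ee d ((((u':ℕ):ℤ) - ((u:ℕ):ℤ)) * ((k:ℕ):ℤ))) := by
          rw [Finset.sum_comm]
          apply Finset.sum_congr rfl
          intro u _
          rw [Finset.sum_comm]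
          apply Finset.sum_congr rfl
          intro u' _
          rw [Finset.mul_sum]
          apply Finset.sum_congr rfl
          intro k _
          have : ee d (-(((k:ℕ):ℤ) * ((u:ℕ):ℤ))) * ee d (((k:ℕ):ℤ) * ((u':ℕ):ℤ))
              = ee d ((((u':ℕ):ℤ) - ((u:ℕ):ℤ)) * ((k:ℕ):ℤ)) := by
            rw [← ee_add]; congr 1; ring
          calc ((y u : ℂ) * ee d (-(((k:ℕ):ℤ) * ((u:ℕ):ℤ)))) *
                ((y u' : ℂ) * ee d (((k:ℕ):ℤ) * ((u':ℕ):ℤ)))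
              = (y u : ℂ) * (y u') * (ee d (-(((k:ℕ):ℤ) * ((u:ℕ):ℤ))) * ee d (((k:ℕ):ℤ) * ((u':ℕ):ℤ))) := by ring
            _ = (y u : ℂ) * (y u') * ee d ((((u':ℕ):ℤ) - ((u:ℕ):ℤ)) * ((k:ℕ):ℤ)) := by rw [this]
      _ = ∑ u : Fin d, (y u : ℂ) * (y u) * d := by
          apply Finset.sum_congr rfl
          intro u _
          rw [Finset.sum_eq_single u]
          · rw [ee_sum d hd, if_pos (by simp)]
          · intro u' _ hne
            rw [ee_sum d hd, if_neg, mul_zero]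
            intro hdvd
            exact hne (fin_dvd_eq u u' hdvd)
          · intro h; exact absurd (Finset.mem_univ u) h
      _ = (d:ℂ) * ∑ u : Fin d, (y u : ℂ)^2 := by
          rw [Finset.mul_sum]
          apply Finset.sum_congr rfl
          intro u _
          ring
  exact_mod_cast hC

lemma sum_sq_cconv (d : ℕ) [NeZero d] (y b : Fin d → ℝ) :
    ∑ u : Fin d, (cconv d y b u)^2
      = (d:ℝ)⁻¹ * ∑ k : Fin d, Complex.normSq (dft d y k) * Complex.normSq (dft d b k) := by
  have hd : (d:ℝ) ≠ 0 := Nat.cast_ne_zero.mpr (NeZero.ne d)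
  have hp := parseval d (cconv d y b)
  have h2 : ∀ k ∈ Finset.univ, (Complex.normSq (dft d (cconv d y b) k) : ℝ)
      = Complex.normSq (dft d y k) * Complex.normSq (dft d b k) := by
    intro k _; rw [dft_cconv, Complex.normSq_mul]
  rw [Finset.sum_congr rfl h2] at hp
  rw [hp]
  field_simp

lemma rConv_eq (d n : ℕ) [NeZero d] (xs zs : ℕ → Fin d → ℝ) (a b : Fin d → ℝ) :
    rConv d n xs zs a b = (d:ℝ)⁻¹ * ∑ k : Fin d,
      Complex.normSq (dft d b k) *
        (empPS d n xs k - Complex.normSq (dft d a k) * empPS d n zs k) := by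
  unfold rConv empPS
  simp only [sum_sq_cconv, dft_cconv, Complex.normSq_mul]
  simp only [mul_sub, Finset.mul_sum, Finset.sum_sub_distrib]
  congr 1
  · rw [Finset.sum_comm]
    apply Finset.sum_congr rfl
    intro i _
    apply Finset.sum_congr rfl
    intro k _
    ring
  · rw [Finset.sum_comm]
    apply Finset.sum_congr rfl
    intro i _
    apply Finset.sum_congr rfl
    intro k _
    ring

lemma cconv_comm (d : ℕ) [NeZero d] (a b : Fin d → ℝ) : cconv d a b = cconv d b a := by
  funext u
  unfold cconv
  rw [← Equiv.sum_comp (Equiv.subLeft u) (fun v => a v * b (u - v))]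
  apply Finset.sum_congr rfl
  intro v _
  simp only [Equiv.subLeft_apply, sub_sub_cancel]
  ring

lemma hasDerivAt_cconv (d : ℕ) [NeZero d] (y γ : Fin d → ℝ) (v u : Fin d) (t₀ : ℝ) :
    HasDerivAt (fun t => cconv d y (Function.update γ v t) u) (y (u - v)) t₀ := by
  have key : ∀ w ∈ Finset.univ, HasDerivAt
      (fun t => y w * Function.update γ v t (u - w))
      (if w = u - v then y w else 0) t₀ := by
    intro w _
    by_cases h : u - w = v
    · have hw : w = u - v := by rw [← h, sub_sub_cancel]
      rw [if_pos hw]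
      subst h
      simp only [Function.update_self]
      simpa using (hasDerivAt_id t₀).const_mul (y w)
    · have hw : ¬ (w = u - v) := by
        intro hc
        exact h (by rw [hc, sub_sub_cancel])
      rw [if_neg hw]
      simp only [Function.update_of_ne h]
      exact hasDerivAt_const t₀ _
  have hs := HasDerivAt.fun_sum key
  rw [Finset.sum_ite_eq' Finset.univ (u - v) y, if_pos (Finset.mem_univ _)] at hs
  exact hs

lemma hasDerivAt_rConv (d n : ℕ) [NeZero d] (xs zs : ℕ → Fin d → ℝ) (a γ : Fin d → ℝ)
    (v : Fin d) (t₀ : ℝ) :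
    HasDerivAt (fun t => rConv d n xs zs a (Function.update γ v t))
      ((n:ℝ)⁻¹ * ∑ i ∈ Finset.range n, ∑ u : Fin d,
          2 * cconv d (xs i) (Function.update γ v t₀) u ^ 1 * xs i (u - v)
        - (n:ℝ)⁻¹ * ∑ i ∈ Finset.range n, ∑ u : Fin d,
          2 * cconv d (cconv d a (zs i)) (Function.update γ v t₀) u ^ 1
            * cconv d a (zs i) (u - v)) t₀ := by
  simp only [rConv]
  apply HasDerivAt.sub
  · apply HasDerivAt.const_mul
    apply HasDerivAt.fun_sum
    intro i _
    apply HasDerivAt.fun_sum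
    intro u _
    have := (hasDerivAt_cconv d (xs i) γ v u t₀).pow 2
    exact this
  · apply HasDerivAt.const_mul
    apply HasDerivAt.fun_sum
    intro i _
    apply HasDerivAt.fun_sum
    intro u _
    have := (hasDerivAt_cconv d (cconv d a (zs i)) γ v u t₀).pow 2
    exact this

lemma sum_G (d n : ℕ) [NeZero d] (β : Fin d → ℝ) (y : Fin d → ℝ) :
    ∑ v : Fin d, β v * ∑ u : Fin d, 2 * cconv d y β u ^ 1 * y (u - v)
      = ∑ u : Fin d, 2 * cconv d y β u ^ 2 := by
  calc ∑ v : Fin d, β v * ∑ u : Fin d, 2 * cconv d y β u ^ 1 * y (u - v)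
      = ∑ v : Fin d, ∑ u : Fin d, β v * (2 * cconv d y β u ^ 1 * y (u - v)) := by
        apply Finset.sum_congr rfl
        intro v _
        rw [Finset.mul_sum]
    _ = ∑ u : Fin d, ∑ v : Fin d, β v * (2 * cconv d y β u ^ 1 * y (u - v)) :=
        Finset.sum_comm
    _ = ∑ u : Fin d, 2 * cconv d y β u ^ 2 := by
        apply Finset.sum_congr rfl
        intro u _
        have h1 : ∑ v : Fin d, β v * (2 * cconv d y β u ^ 1 * y (u - v))
            = 2 * cconv d y β u ^ 1 * ∑ v : Fin d, β v * y (u - v) := by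
          rw [Finset.mul_sum]
          apply Finset.sum_congr rfl
          intro v _
          ring
        have h2 : ∑ v : Fin d, β v * y (u - v) = cconv d y β u := by
          rw [cconv_comm d y β]
          rfl
        rw [h1, h2]
        ring

lemma rconv_crit (d n : ℕ) [NeZero d] (xs zs : ℕ → Fin d → ℝ) (a₀ : Fin d → ℝ)
    (b₀ : Fin d → Fin d → ℝ) (ℓ : Fin d)
    (h : ∀ v : Fin d, HasDerivAt (fun t : ℝ =>
        VConv d n d xs zs a₀ (Function.update b₀ ℓ (Function.update (b₀ ℓ) v t))) 0 (b₀ ℓ v)) :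
    rConv d n xs zs a₀ (b₀ ℓ) = 0 := by
  set β := b₀ ℓ with hβ
  set r := rConv d n xs zs a₀ β with hr
  set G : Fin d → ℝ := fun v =>
    (n:ℝ)⁻¹ * ∑ i ∈ Finset.range n, ∑ u : Fin d,
        2 * cconv d (xs i) β u ^ 1 * xs i (u - v)
      - (n:ℝ)⁻¹ * ∑ i ∈ Finset.range n, ∑ u : Fin d,
        2 * cconv d (cconv d a₀ (zs i)) β u ^ 1 * cconv d a₀ (zs i) (u - v) with hGdef
  have hG : ∀ v : Fin d, 2 * r * G v = 0 := by
    intro v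
    have h2 : HasDerivAt (fun t : ℝ =>
        VConv d n d xs zs a₀ (Function.update b₀ ℓ (Function.update (b₀ ℓ) v t)))
        (∑ ℓ' : Fin d, if ℓ' = ℓ then 2 * r * G v else 0) (b₀ ℓ v) := by
      simp only [VConv]
      apply HasDerivAt.fun_sum
      intro ℓ' _
      by_cases hne : ℓ' = ℓ
      · subst hne
        rw [if_pos rfl]
        simp only [Function.update_self]
        have hd := (hasDerivAt_rConv d n xs zs a₀ (b₀ ℓ') v (b₀ ℓ' v)).fun_pow 2
        rw [Function.update_eq_self] at hd
        simpa [hGdef, hr, hβ] using hd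
      · rw [if_neg hne]
        simp only [Function.update_of_ne hne]
        exact hasDerivAt_const _ _
    have hu := (h v).unique h2
    rw [Finset.sum_ite_eq' Finset.univ ℓ (fun _ => 2 * r * G v),
      if_pos (Finset.mem_univ _)] at hu
    exact hu.symm
  -- pair with β
  have swap : ∀ (F : ℕ → Fin d → ℝ),
      ∑ v : Fin d, β v * ((n:ℝ)⁻¹ * ∑ i ∈ Finset.range n, ∑ u : Fin d,
          2 * cconv d (F i) β u ^ 1 * F i (u - v))
        = 2 * ((n:ℝ)⁻¹ * ∑ i ∈ Finset.range n, ∑ u : Fin d, cconv d (F i) β u ^ 2) := by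
    intro F
    calc ∑ v : Fin d, β v * ((n:ℝ)⁻¹ * ∑ i ∈ Finset.range n, ∑ u : Fin d,
            2 * cconv d (F i) β u ^ 1 * F i (u - v))
        = (n:ℝ)⁻¹ * ∑ v : Fin d, β v * (∑ i ∈ Finset.range n, ∑ u : Fin d,
            2 * cconv d (F i) β u ^ 1 * F i (u - v)) := by
          rw [Finset.mul_sum]
          apply Finset.sum_congr rfl
          intro v _
          ring
      _ = (n:ℝ)⁻¹ * ∑ v : Fin d, ∑ i ∈ Finset.range n, β v * (∑ u : Fin d,
            2 * cconv d (F i) β u ^ 1 * F i (u - v)) := by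
          congr 1
          apply Finset.sum_congr rfl
          intro v _
          rw [Finset.mul_sum]
      _ = (n:ℝ)⁻¹ * ∑ i ∈ Finset.range n, ∑ v : Fin d, β v * (∑ u : Fin d,
            2 * cconv d (F i) β u ^ 1 * F i (u - v)) := by rw [Finset.sum_comm]
      _ = (n:ℝ)⁻¹ * ∑ i ∈ Finset.range n, ∑ u : Fin d, 2 * cconv d (F i) β u ^ 2 := by
          congr 1
          apply Finset.sum_congr rfl
          intro i _
          exact sum_G d n β (F i)
      _ = 2 * ((n:ℝ)⁻¹ * ∑ i ∈ Finset.range n, ∑ u : Fin d, cconv d (F i) β u ^ 2) := by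
          simp only [Finset.mul_sum]
          apply Finset.sum_congr rfl
          intro i _
          apply Finset.sum_congr rfl
          intro u _
          ring
  have key : ∑ v : Fin d, β v * G v = 2 * r := by
    have expand : ∀ v : Fin d, β v * G v
        = β v * ((n:ℝ)⁻¹ * ∑ i ∈ Finset.range n, ∑ u : Fin d,
            2 * cconv d (xs i) β u ^ 1 * xs i (u - v))
          - β v * ((n:ℝ)⁻¹ * ∑ i ∈ Finset.range n, ∑ u : Fin d,
            2 * cconv d (cconv d a₀ (zs i)) β u ^ 1 * cconv d a₀ (zs i) (u - v)) := by
      intro v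
      rw [hGdef]
      ring
    rw [Finset.sum_congr rfl (fun v _ => expand v), Finset.sum_sub_distrib,
      swap xs, swap (fun i => cconv d a₀ (zs i)), hr]
    unfold rConv
    ring
  have hzero : ∑ v : Fin d, β v * (2 * r * G v) = 0 := by
    simp [hG]
  have h4 : 2 * r * (2 * r) = 0 := by
    calc 2 * r * (2 * r) = 2 * r * ∑ v : Fin d, β v * G v := by rw [key]
      _ = ∑ v : Fin d, β v * (2 * r * G v) := by
          rw [Finset.mul_sum]; apply Finset.sum_congr rfl; intro v _; ring
      _ = 0 := hzero
  nlinarith [h4]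

open MeasureTheory ProbabilityTheory in
lemma indep_add_null {Ω : Type*} [MeasureSpace Ω] [IsProbabilityMeasure (ℙ : Measure Ω)]
    (X Y : Ω → ℝ) (hX : Measurable X) (hY : Measurable Y)
    (hind : IndepFun Y X ℙ)
    (hmap : Measure.map X ℙ = gaussianReal 0 1) :
    ℙ {ω | X ω + Y ω = 0} = 0 := by
  have hS : MeasurableSet {p : ℝ × ℝ | p.2 + p.1 = 0} :=
    (isClosed_eq (continuous_snd.add continuous_fst) continuous_const).measurableSet
  have hpre : {ω | X ω + Y ω = 0}
      = (fun ω => (Y ω, X ω)) ⁻¹' {p : ℝ × ℝ | p.2 + p.1 = 0} := by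
    ext ω; simp
  rw [hpre, ← Measure.map_apply (hY.prodMk hX) hS]
  rw [(indepFun_iff_map_prod_eq_prod_map_map hY.aemeasurable hX.aemeasurable).mp hind, hmap]
  haveI : IsProbabilityMeasure (Measure.map Y ℙ) := Measure.isProbabilityMeasure_map hY.aemeasurable
  rw [Measure.prod_apply hS]
  have hslice : ∀ y : ℝ, (gaussianReal 0 1) {a : ℝ | a + y = 0} = 0 := by
    intro y
    have h1 : {a : ℝ | a + y = 0} = {-y} := by
      ext x
      simp [eq_neg_iff_add_eq_zero]
    rw [h1]
    exact gaussianReal_absolutelyContinuous 0 one_ne_zero (Real.volume_singleton)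
  simp [hslice]

lemma gaussian_comb_null (d : ℕ) [NeZero d] {Ω : Type*} [MeasureSpace Ω]
    [IsProbabilityMeasure (ℙ : Measure Ω)] (zbar z : ℕ → Ω → Fin d → ℝ)
    (hwn : IsWhiteNoisePair d zbar z) (c : Fin d → ℝ) (hc : c 0 = 1) :
    ℙ {ω | ∑ u : Fin d, c u * z 0 ω u = 0} = 0 := by
  obtain ⟨hm1, hm2, hindep, hgauss⟩ := hwn
  have hcoordmeas : ∀ p, Measurable (coords d zbar z p) := by
    rintro ⟨b, i, u⟩
    cases b
    · exact (measurable_pi_apply u).comp (hm1 i)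
    · exact (measurable_pi_apply u).comp (hm2 i)
  set w : Bool × ℕ × Fin d → ℝ := fun p => if p.1 = true ∧ p.2.1 = 0 then c p.2.2 else 0
    with hw
  set f : Bool × ℕ × Fin d → Ω → ℝ := fun p ω => w p * coords d zbar z p ω with hf
  have hfmeas : ∀ p, Measurable (f p) := fun p => (hcoordmeas p).const_mul (w p)
  have hfind : iIndepFun f ℙ :=
    hindep.comp (fun p x => w p * x) (fun p => measurable_id.const_mul _)
  set p₀ : Bool × ℕ × Fin d := (true, 0, (0 : Fin d)) with hp₀def
  set s : Finset (Bool × ℕ × Fin d) :=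
    (Finset.univ.erase (0 : Fin d)).image (fun u => (true, 0, u)) with hs
  have hp₀ : p₀ ∉ s := by
    simp only [hs, Finset.mem_image, Finset.mem_erase]
    rintro ⟨u, ⟨hu, -⟩, he⟩
    apply hu
    have := congrArg (fun q : Bool × ℕ × Fin d => q.2.2) he
    exact this
  have hindYX : IndepFun (∑ p ∈ s, f p) (f p₀) ℙ :=
    hfind.indepFun_finsetSum_of_notMem hfmeas hp₀
  have hfp₀ : f p₀ = coords d zbar z p₀ := by
    funext ω
    simp [hf, hw, hp₀def, hc, coords]
  have hmapX : Measure.map (f p₀) ℙ = gaussianReal 0 1 := by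
    rw [hfp₀]; exact hgauss p₀
  have hnull := indep_add_null (f p₀) (∑ p ∈ s, f p)
    (by rw [hfp₀]; exact hcoordmeas p₀)
    (by rw [show (∑ p ∈ s, f p) = fun a => ∑ p ∈ s, f p a from funext fun a => Finset.sum_apply _ _ _]
        exact Finset.measurable_sum s (fun p _ => hfmeas p)) hindYX hmapX
  have hset : {ω | ∑ u : Fin d, c u * z 0 ω u = 0}
      = {ω | f p₀ ω + (∑ p ∈ s, f p) ω = 0} := by
    ext ω
    simp only [Set.mem_setOf_eq, Finset.sum_apply]
    have hsum : ∑ p ∈ s, f p ω = ∑ u ∈ Finset.univ.erase (0 : Fin d), c u * z 0 ω u := by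
      rw [hs, Finset.sum_image (by intro a _ b _ h; exact congrArg (fun q : Bool × ℕ × Fin d => q.2.2) h)]
      apply Finset.sum_congr rfl
      intro u _
      simp [hf, hw, coords]
    rw [hsum]
    have hfp₀ω : f p₀ ω = c 0 * z 0 ω 0 := by simp [hf, hw, hp₀def, coords]
    rw [hfp₀ω]
    rw [Finset.add_sum_erase Finset.univ (fun u => c u * z 0 ω u) (Finset.mem_univ 0)]
  rw [hset]
  exact hnull

lemma ae_dft_ne (d : ℕ) [NeZero d] {Ω : Type*} [MeasureSpace Ω]
    [IsProbabilityMeasure (ℙ : Measure Ω)] (zbar z : ℕ → Ω → Fin d → ℝ)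
    (hwn : IsWhiteNoisePair d zbar z) :
    ∀ᵐ ω ∂ℙ, ∀ k : Fin d, dft d (z 0 ω) k ≠ 0 := by
  rw [ae_all_iff]
  intro k
  set c : Fin d → ℝ := fun u =>
    (Complex.exp (-(2 * Real.pi * Complex.I * ((k:ℕ):ℂ) * ((u:ℕ):ℂ)) / (d:ℂ))).re with hcdef
  have hc0 : c 0 = 1 := by
    simp [hcdef]
  have hnull := gaussian_comb_null d zbar z hwn c hc0
  have hsub : {ω | dft d (z 0 ω) k = 0} ⊆ {ω | ∑ u : Fin d, c u * z 0 ω u = 0} := by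
    intro ω hω
    simp only [Set.mem_setOf_eq] at hω ⊢
    have h0 : (dft d (z 0 ω) k).re = 0 := by rw [hω]; simp
    rw [dft, Complex.re_sum] at h0
    rw [← h0]
    apply Finset.sum_congr rfl
    intro u _
    rw [hcdef]
    simp [Complex.mul_re]
    ring
  have h0 : ℙ {ω | dft d (z 0 ω) k = 0} = 0 := measure_mono_null hsub hnull
  rw [Filter.eventually_iff]
  rw [MeasureTheory.mem_ae_iff]
  have : {ω | dft d (z 0 ω) k ≠ 0}ᶜ = {ω | dft d (z 0 ω) k = 0} := by
    ext ω; simp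
  rw [this]
  exact h0

theorem stmt16 {d n : ℕ} (hd : 1 ≤ d) (hn : 1 ≤ n)
    {Ω : Type*} [MeasureSpace Ω] [IsProbabilityMeasure (ℙ : Measure Ω)]
    (abar : Fin d → ℝ) (habar : ∀ k : Fin d, dft d abar k ≠ 0)
    (zbar z : ℕ → Ω → Fin d → ℝ) (hwn : IsWhiteNoisePair d zbar z) :
    ∀ᵐ ω ∂ℙ, ∀ (a₀ : Fin d → ℝ), ∀ b₀ ∈ B0 d,
      -- `∇_α V_n(α̊, β̊) = 0`
      (∀ u : Fin d,
        HasDerivAt (fun t : ℝ =>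
          VConv d n d (fun i => cconv d abar (zbar i ω)) (fun i => z i ω)
            (Function.update a₀ u t) b₀) 0 (a₀ u)) →
      -- `∇_β V_n(α̊, β̊) = 0`
      (∀ ℓ v : Fin d,
        HasDerivAt (fun t : ℝ =>
          VConv d n d (fun i => cconv d abar (zbar i ω)) (fun i => z i ω) a₀
            (Function.update b₀ ℓ (Function.update (b₀ ℓ) v t))) 0 (b₀ ℓ v)) →
      a₀ ∈ An d n abar (fun i => zbar i ω) (fun i => z i ω) ∧
        (∀ b ∈ B0 d,
          VConv d n d (fun i => cconv d abar (zbar i ω)) (fun i => z i ω) a₀ b ≤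
            VConv d n d (fun i => cconv d abar (zbar i ω)) (fun i => z i ω) a₀ b₀) ∧
        (∀ a : Fin d → ℝ,
          VConv d n d (fun i => cconv d abar (zbar i ω)) (fun i => z i ω) a₀ b₀ ≤
            VConv d n d (fun i => cconv d abar (zbar i ω)) (fun i => z i ω) a b₀) := by
  haveI : NeZero d := ⟨by omega⟩
  filter_upwards [ae_dft_ne d zbar z hwn] with ω hω
  intro a₀ b₀ hb₀ hα hβ
  set xs : ℕ → Fin d → ℝ := fun i => cconv d abar (zbar i ω) with hxs
  set zs : ℕ → Fin d → ℝ := fun i => z i ω with hzs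
  -- positivity of the empirical noise power spectrum
  have hzpos : ∀ k : Fin d, 0 < empPS d n zs k := by
    intro k
    have h0 : 0 < Complex.normSq (dft d (zs 0) k) := by
      rw [Complex.normSq_pos]
      exact hω k
    have hsum : Complex.normSq (dft d (zs 0) k)
        ≤ ∑ i ∈ Finset.range n, Complex.normSq (dft d (zs i) k) := by
      apply Finset.single_le_sum (f := fun i => Complex.normSq (dft d (zs i) k))
      · intro i _; exact Complex.normSq_nonneg _
      · exact Finset.mem_range.mpr (by omega)
    have hninv : (0:ℝ) < (n:ℝ)⁻¹ := by
      apply inv_pos.mpr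
      exact_mod_cast (by omega : 0 < n)
    unfold empPS
    exact mul_pos hninv (lt_of_lt_of_le h0 hsum)
  -- all residuals vanish at the critical point
  have hr : ∀ ℓ : Fin d, rConv d n xs zs a₀ (b₀ ℓ) = 0 :=
    fun ℓ => rconv_crit d n xs zs a₀ b₀ ℓ (hβ ℓ)
  -- the spectral discrepancy vanishes
  set sv : Fin d → ℝ := fun k =>
    empPS d n xs k - Complex.normSq (dft d a₀ k) * empPS d n zs k with hsv
  have hsv0 : ∀ k : Fin d, sv k = 0 := by
    set W : Matrix (Fin d) (Fin d) ℝ :=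
      Matrix.of fun ℓ k => Complex.normSq (dft d (b₀ ℓ) k) with hW
    have hWrows : LinearIndependent ℝ (fun ℓ : Fin d => W ℓ) := hb₀.1
    have hWunit : IsUnit W := Matrix.linearIndependent_rows_iff_isUnit.mp hWrows
    have hinj : Function.Injective W.mulVec := Matrix.mulVec_injective_iff_isUnit.mpr hWunit
    have hdne : (d:ℝ) ≠ 0 := Nat.cast_ne_zero.mpr (NeZero.ne d)
    have hmv : W.mulVec sv = 0 := by
      funext ℓ
      have h1 := hr ℓ
      rw [rConv_eq] at h1
      have h2 : ∑ k : Fin d, Complex.normSq (dft d (b₀ ℓ) k) * sv k = 0 := by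
        field_simp at h1
        rw [mul_zero] at h1
        exact h1
      simpa [Matrix.mulVec, dotProduct, hW] using h2
    have : sv = 0 := hinj (by rw [hmv, Matrix.mulVec_zero])
    intro k
    rw [this]
    rfl
  refine ⟨?_, ?_, ?_⟩
  · -- a₀ ∈ An
    intro k
    have h1 := hsv0 k
    simp only [hsv] at h1
    have hz := hzpos k
    have : Complex.normSq (dft d a₀ k) * empPS d n zs k = empPS d n xs k := by linarith
    rw [eq_div_iff (ne_of_gt hz)]
    exact this
  · -- sup over discriminators
    intro b hb
    have hVb : VConv d n d xs zs a₀ b = 0 := by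
      unfold VConv
      apply Finset.sum_eq_zero
      intro ℓ _
      rw [rConv_eq]
      have : ∀ k : Fin d, Complex.normSq (dft d (b ℓ) k) *
          (empPS d n xs k - Complex.normSq (dft d a₀ k) * empPS d n zs k) = 0 := by
        intro k
        have h3 := hsv0 k
        simp only [hsv] at h3
        rw [h3, mul_zero]
      rw [Finset.sum_congr rfl (fun k _ => this k)]
      simp
    have hVb₀ : VConv d n d xs zs a₀ b₀ = 0 := by
      unfold VConv
      apply Finset.sum_eq_zero
      intro ℓ _
      rw [hr ℓ]
      ring
    rw [hVb, hVb₀]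
  · -- inf over generators
    intro a
    have hVb₀ : VConv d n d xs zs a₀ b₀ = 0 := by
      unfold VConv
      apply Finset.sum_eq_zero
      intro ℓ _
      rw [hr ℓ]
      ring
    rw [hVb₀]
    unfold VConv
    apply Finset.sum_nonneg
    intro ℓ _
    exact sq_nonneg _
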